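/- For each triple (a,b,c) of unit quaternions, the diffeomorphism F(p,q) = (apc⁻¹, bqc⁻¹) of S³×S³ commutes with the almost complex structure J, i.e. dF ∘ J = J ∘ dF. -/

import Mathlib

open Quaternion

noncomputable section

/-- The almost complex structure `J` at the point `(p, q)` of `S³ × S³`,
acting on `T_p S³ × T_q S³ ⊆ ℍ × ℍ`:
`J(U,V) = (1/√3)(2pq⁻¹V − U, −2qp⁻¹U + V)`. -/
def Jmap (p q : ℍ[ℝ]) (W : ℍ[ℝ] × ℍ[ℝ]) : ℍ[ℝ] × ℍ[ℝ] :=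
  (Real.sqrt 3)⁻¹ •
    ((2 : ℝ) • (p * q⁻¹ * W.2) - W.1, -((2 : ℝ) • (q * p⁻¹ * W.1)) + W.2)

/-- The almost product structure `P` at `(p, q)`: `P(U,V) = (pq⁻¹V, qp⁻¹U)`. -/
def Pmap (p q : ℍ[ℝ]) (W : ℍ[ℝ] × ℍ[ℝ]) : ℍ[ℝ] × ℍ[ℝ] :=
  (p * q⁻¹ * W.2, q * p⁻¹ * W.1)

/-- The product round metric on `S³ × S³` (on tangent pairs). -/
def prodInner (X Y : ℍ[ℝ] × ℍ[ℝ]) : ℝ :=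
  (inner ℝ X.1 Y.1 : ℝ) + (inner ℝ X.2 Y.2 : ℝ)

/-- The nearly Kähler metric `g(X,Y) = (1/2)(⟨X,Y⟩ + ⟨JX,JY⟩)` at `(p,q)`. -/
def gmet (p q : ℍ[ℝ]) (X Y : ℍ[ℝ] × ℍ[ℝ]) : ℝ :=
  (1 / 2) * (prodInner X Y + prodInner (Jmap p q X) (Jmap p q Y))

/-- The differential of `F(p,q) = (apc⁻¹, bqc⁻¹)` on tangent pairs. -/
def dF (a b c : ℍ[ℝ]) (W : ℍ[ℝ] × ℍ[ℝ]) : ℍ[ℝ] × ℍ[ℝ] :=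
  (a * W.1 * c⁻¹, b * W.2 * c⁻¹)

/-- `F(p,q) = (apc⁻¹, bqc⁻¹)` commutes with `J`: `dF ∘ J = J ∘ dF`. -/
theorem stmt_5 (a b c p q : ℍ[ℝ]) (ha : ‖a‖ = 1) (hb : ‖b‖ = 1) (hc : ‖c‖ = 1)
    (hp : ‖p‖ = 1) (hq : ‖q‖ = 1) (W : ℍ[ℝ] × ℍ[ℝ]) :
    dF a b c (Jmap p q W) = Jmap (a * p * c⁻¹) (b * q * c⁻¹) (dF a b c W) := by
  have hb0 : b ≠ 0 := by intro h; simp [h] at hb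
  have hc0 : c ≠ 0 := by intro h; simp [h] at hc
  have ha0 : a ≠ 0 := by intro h; simp [h] at ha
  have hp0 : p ≠ 0 := by intro h; simp [h] at hp
  have hq0 : q ≠ 0 := by intro h; simp [h] at hq
  have key1 : (a * p * c⁻¹) * (b * q * c⁻¹)⁻¹ = a * (p * q⁻¹) * b⁻¹ := by
    simp [div_eq_mul_inv, mul_inv_rev, mul_assoc, inv_mul_cancel_left₀, hb0, hq0, hc0]
  have key2 : (b * q * c⁻¹) * (a * p * c⁻¹)⁻¹ = b * (q * p⁻¹) * a⁻¹ := by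
    simp [div_eq_mul_inv, mul_inv_rev, mul_assoc, inv_mul_cancel_left₀, ha0, hp0, hc0]
  simp only [dF, Jmap, key1, key2, Prod.smul_mk, Prod.mk.injEq, smul_sub, smul_add, smul_neg,
    mul_smul_comm, smul_mul_assoc, mul_sub, sub_mul, mul_add, add_mul, neg_mul, mul_neg]
  constructor <;> congr 1 <;> congr 1 <;>
    simp [mul_assoc, inv_mul_cancel_left₀, hb0, ha0]
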